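/- Let (X,d,μ) be a metric measure space with p, s bounded variable exponents. Then the homogeneous Hajłasz–Triebel–Lizorkin space with q ≡ ∞ coincides with the homogeneous Hajłasz–Sobolev space: Ṁ^{s(·)}_{p(·),∞}(X,d,μ) = Ṁ^{s(·),p(·)}(X,d,μ), with equal quasi-semi-norms. -/

import Mathlib

open MeasureTheory Metric ENNReal

noncomputable section

/-- The semi-modular `∫ f(x)^{p(x)} dμ` of an `ℝ≥0∞`-valued function. -/
def modE {X : Type*} [MeasurableSpace X] (μ : Measure X) (p : X → ℝ) (f : X → ℝ≥0∞) : ℝ≥0∞ :=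
  ∫⁻ x, f x ^ p x ∂μ

/-- The Luxemburg quasi-norm associated to the variable exponent `p`. -/
def luxE {X : Type*} [MeasurableSpace X] (μ : Measure X) (p : X → ℝ) (f : X → ℝ≥0∞) : ℝ≥0∞ :=
  sInf {l : ℝ≥0∞ | 0 < l ∧ l ≠ ⊤ ∧ modE μ p (fun x => f x / l) ≤ 1}

/-- The Luxemburg quasi-norm of a real-valued function. -/
def luxR {X : Type*} [MeasurableSpace X] (μ : Measure X) (p : X → ℝ) (u : X → ℝ) : ℝ≥0∞ :=
  luxE μ p (fun x => (‖u x‖₊ : ℝ≥0∞))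

/-- `g` is a scalar `s(·)`-gradient of `u` on the set `E`. -/
def IsSGradOn {X : Type*} [MeasurableSpace X] [PseudoMetricSpace X] (μ : Measure X)
    (E : Set X) (s : X → ℝ) (u : X → ℝ) (g : X → ℝ≥0∞) : Prop :=
  Measurable g ∧ ∃ N : Set X, N ⊆ E ∧ μ N = 0 ∧ ∀ x ∈ E \ N, ∀ y ∈ E \ N,
    ENNReal.ofReal |u x - u y| ≤
      ENNReal.ofReal (dist x y ^ s x) * g x + ENNReal.ofReal (dist x y ^ s y) * g y

/-- `{g k}` is a vector (fractional) `s(·)`-gradient of `u` on the set `E`. -/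
def IsVGradOn {X : Type*} [MeasurableSpace X] [PseudoMetricSpace X] (μ : Measure X)
    (E : Set X) (s : X → ℝ) (u : X → ℝ) (g : ℤ → X → ℝ≥0∞) : Prop :=
  (∀ k, Measurable (g k)) ∧ ∃ N : Set X, N ⊆ E ∧ μ N = 0 ∧
    ∀ x ∈ E \ N, ∀ y ∈ E \ N, ∀ k : ℤ,
      (2 : ℝ) ^ (-(k : ℝ) - 1) ≤ dist x y → dist x y < (2 : ℝ) ^ (-(k : ℝ)) →
      ENNReal.ofReal |u x - u y| ≤
        ENNReal.ofReal (dist x y ^ s x) * g k x + ENNReal.ofReal (dist x y ^ s y) * g k y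

/-- Pointwise `ℓ^{q}`-norm of a sequence, `q ∈ (0,∞]`. -/
def seqNormE (q : ℝ≥0∞) (v : ℤ → ℝ≥0∞) : ℝ≥0∞ :=
  if q = ⊤ then ⨆ k, v k else (∑' k, v k ^ q.toReal) ^ (1 / q.toReal)

/-- The mixed `L^{p(·)}(ℓ^{q(·)})` quasi-norm. -/
def LpEllNorm {X : Type*} [MeasurableSpace X] (μ : Measure X) (p : X → ℝ) (q : X → ℝ≥0∞)
    (g : ℤ → X → ℝ≥0∞) : ℝ≥0∞ :=
  luxE μ p (fun x => seqNormE (q x) (fun k => g k x))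

/-- The semi-modular of the mixed `ℓ^{q(·)}(L^{p(·)})` space. -/
def ellLpMod {X : Type*} [MeasurableSpace X] (μ : Measure X) (p : X → ℝ) (q : X → ℝ≥0∞)
    (g : ℤ → X → ℝ≥0∞) : ℝ≥0∞ :=
  ∑' k : ℤ, sInf {l : ℝ≥0∞ | 0 < l ∧ l ≠ ⊤ ∧
    modE μ p (fun x => g k x / l ^ (1 / q x).toReal) ≤ 1}

/-- The mixed `ℓ^{q(·)}(L^{p(·)})` quasi-norm. -/
def ellLpNorm {X : Type*} [MeasurableSpace X] (μ : Measure X) (p : X → ℝ) (q : X → ℝ≥0∞)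
    (g : ℤ → X → ℝ≥0∞) : ℝ≥0∞ :=
  sInf {l : ℝ≥0∞ | 0 < l ∧ l ≠ ⊤ ∧ ellLpMod μ p q (fun k x => g k x / l) ≤ 1}

/-- Quasi-seminorm of the homogeneous variable Hajłasz–Sobolev space `Ṁ^{s(·),p(·)}(E)`. -/
def MNormOn {X : Type*} [MeasurableSpace X] [PseudoMetricSpace X] (μ : Measure X)
    (E : Set X) (p s : X → ℝ) (u : X → ℝ) : ℝ≥0∞ :=
  sInf ((fun g => luxE (μ.restrict E) p g) '' {g | IsSGradOn μ E s u g})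

/-- Quasi-seminorm of the homogeneous Hajłasz–Triebel–Lizorkin space `Ṁ^{s(·)}_{p(·),q(·)}(E)`. -/
def TLNormOn {X : Type*} [MeasurableSpace X] [PseudoMetricSpace X] (μ : Measure X)
    (E : Set X) (p : X → ℝ) (q : X → ℝ≥0∞) (s : X → ℝ) (u : X → ℝ) : ℝ≥0∞ :=
  sInf ((fun g => LpEllNorm (μ.restrict E) p q g) '' {g | IsVGradOn μ E s u g})

/-- Quasi-seminorm of the homogeneous Hajłasz–Besov space `Ṅ^{s(·)}_{p(·),q(·)}(E)`. -/
def BNormOn {X : Type*} [MeasurableSpace X] [PseudoMetricSpace X] (μ : Measure X)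
    (E : Set X) (p : X → ℝ) (q : X → ℝ≥0∞) (s : X → ℝ) (u : X → ℝ) : ℝ≥0∞ :=
  sInf ((fun g => ellLpNorm (μ.restrict E) p q g) '' {g | IsVGradOn μ E s u g})


/-- For every positive real `d` there is an integer `k` with `2^(-k-1) ≤ d < 2^(-k)`. -/
lemma existsDyadicScale (d : ℝ) (hd : 0 < d) :
    ∃ k : ℤ, (2 : ℝ) ^ (-(k : ℝ) - 1) ≤ d ∧ d < (2 : ℝ) ^ (-(k : ℝ)) := by
  set r := Real.logb 2 d with hr
  have hdr : d = (2 : ℝ) ^ r := (Real.rpow_logb (by norm_num) (by norm_num) hd).symm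
  refine ⟨⌈-r⌉ - 1, ?_, ?_⟩
  · rw [hdr, Real.rpow_le_rpow_left_iff (by norm_num : (1:ℝ) < 2)]
    have := Int.le_ceil (-r)
    push_cast
    linarith
  · rw [hdr, Real.rpow_lt_rpow_left_iff (by norm_num : (1:ℝ) < 2)]
    have := Int.ceil_lt_add_one (-r)
    push_cast
    linarith

/-- The homogeneous Hajłasz–Triebel–Lizorkin space with `q ≡ ∞` coincides with the homogeneous
Hajłasz–Sobolev space, with equal quasi-seminorms:
`‖u‖_{Ṁ^{s(·)}_{p(·),∞}} = ‖u‖_{Ṁ^{s(·),p(·)}}` for every measurable `u`. -/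
theorem TL_inftyEq_hajlaszSobolev {X : Type*} [MetricSpace X] [MeasurableSpace X]
    [BorelSpace X] (μ : Measure X) (p s : X → ℝ)
    (hp : ∃ c C : ℝ, 0 < c ∧ ∀ x, c ≤ p x ∧ p x ≤ C)
    (hs : ∃ c C : ℝ, 0 < c ∧ ∀ x, c ≤ s x ∧ s x ≤ C)
    (u : X → ℝ) (hu : Measurable u) :
    TLNormOn μ Set.univ p (fun _ => (⊤ : ℝ≥0∞)) s u = MNormOn μ Set.univ p s u := by
  obtain ⟨cs, Cs, hcs, hsc⟩ := hs
  apply le_antisymm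
  · -- TL ≤ M : every scalar gradient yields the constant vector gradient
    apply sInf_le_sInf
    rintro v ⟨g, ⟨hgm, N, hNE, hN0, hg⟩, rfl⟩
    refine ⟨fun _ x => g x,
      ⟨fun _ => hgm, N, hNE, hN0, fun x hx y hy k _ _ => hg x hx y hy⟩, ?_⟩
    simp [LpEllNorm, seqNormE, luxE]
  · -- M ≤ TL : every vector gradient yields the scalar gradient `sup_k g k`
    apply sInf_le_sInf
    rintro v ⟨g, ⟨hgm, N, hNE, hN0, hg⟩, rfl⟩
    refine ⟨fun x => ⨆ k, g k x, ⟨Measurable.iSup hgm, N, hNE, hN0, ?_⟩, ?_⟩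
    · intro x hx y hy
      rcases eq_or_ne x y with rfl | hxy
      · simp [Real.zero_rpow (ne_of_gt (lt_of_lt_of_le hcs (hsc x).1))]
      · have hd : 0 < dist x y := dist_pos.2 hxy
        obtain ⟨k, h1, h2⟩ := existsDyadicScale _ hd
        calc ENNReal.ofReal |u x - u y|
            ≤ ENNReal.ofReal (dist x y ^ s x) * g k x
              + ENNReal.ofReal (dist x y ^ s y) * g k y := hg x hx y hy k h1 h2
          _ ≤ _ :=
            add_le_add (mul_le_mul_of_nonneg_left (le_iSup (fun k => g k x) k) zero_le)
              (mul_le_mul_of_nonneg_left (le_iSup (fun k => g k y) k) zero_le)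
    · simp [LpEllNorm, seqNormE, luxE]

end
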